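/- Let D be a DTMC, R ⊆ S × S, and s1 R s2 such that there exists s1' ∈ post(s1) with (s1',s2) ∉ R and s2' ∈ post(s2) with (s1,s2') ∉ R. Then s1 ≾_R s2 (s2 weakly simulates s1 up to R) if and only if there exists γ > 0 and a flow f on the parametric network N(γ) = N(P(s1,·), γ·P(s2,·), R) that saturates all edges 𝓈→u1 for u1 ∈ MU1 and all edges ū2→𝓉 for u2 ∈ MU2, where MU1 = post(s1) \ R⁻¹(s2) and MU2 = post(s2) \ R(s1). -/

import Mathlib

open Finset
open scoped Classical ENNReal

/-- Vertices of the bipartite network `N(μ, μ', R)`: a source `src`, a sink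
`snk`, left copies `lft s` of states and right copies `rgt t` of states. -/
abbrev Vert (S : Type*) := (Bool × S) ⊕ Bool

variable {S : Type*} [Fintype S]

def src {S : Type*} : Vert S := Sum.inr false
def snk {S : Type*} : Vert S := Sum.inr true
def lft {S : Type*} (s : S) : Vert S := Sum.inl (false, s)
def rgt {S : Type*} (t : S) : Vert S := Sum.inl (true, t)

/-- Capacities of `N(μ, μ', R)`: `μ(s)` on `src → lft s`, `μ'(t)` on
`rgt t → snk`, infinite capacity on `lft s → rgt t` whenever `(s,t) ∈ R`,
and `0` (no edge) otherwise. -/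
noncomputable def cap (μ μ' : S → ℝ) (R : Set (S × S)) : Vert S → Vert S → ℝ≥0∞ :=
  fun v w =>
    match v, w with
    | Sum.inr false, Sum.inl (false, s) => ENNReal.ofReal (μ s)
    | Sum.inl (true, t), Sum.inr true => ENNReal.ofReal (μ' t)
    | Sum.inl (false, s), Sum.inl (true, t) => if (s, t) ∈ R then ⊤ else 0
    | _, _ => 0

/-- `f` is a flow on the network with capacities `c`: capacity constraints,
antisymmetry, and conservation at every internal vertex. -/
def IsFlow (c : Vert S → Vert S → ℝ≥0∞) (f : Vert S → Vert S → ℝ) : Prop :=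
  (∀ v w, ENNReal.ofReal (f v w) ≤ c v w) ∧
  (∀ v w, f v w = - f w v) ∧
  (∀ v : Vert S, v ≠ src → v ≠ snk → (∑ u, f u v) = 0)

/-- The value of a flow: the net outflow of the source. -/
def flowValue (f : Vert S → Vert S → ℝ) : ℝ := ∑ w, f src w

variable {AP : Type*}

/-- A path fragment `a, w₁, …, wₙ, b` with positive probability. -/
def PathPos (P : S → S → ℝ) : S → List S → S → Prop
  | a, [], b => 0 < P a b
  | a, w :: ws, b => 0 < P a w ∧ PathPos P w ws b

/-- `s₂` weakly simulates `s₁` up to `R` in the DTMC `(S, P, L)`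
(Definition 2.14 of the paper, with `δᵢ : S → [0,1]`,
`Uᵢ = {u ∈ post(sᵢ) | δᵢ(u) > 0}`, `Vᵢ = {v ∈ post(sᵢ) | δᵢ(v) < 1}` and
`Kᵢ = Σ_{u} δᵢ(u)·P(sᵢ,u)`). -/
def WeakSimUpTo (P : S → S → ℝ) (L : S → Set AP) (R : Set (S × S))
    (s₁ s₂ : S) : Prop :=
  L s₁ = L s₂ ∧
  ∃ δ₁ δ₂ : S → ℝ,
    (∀ u, 0 ≤ δ₁ u ∧ δ₁ u ≤ 1) ∧ (∀ u, 0 ≤ δ₂ u ∧ δ₂ u ≤ 1) ∧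
    -- (1) stutter steps respect the relation
    (∀ v, 0 < P s₁ v → δ₁ v < 1 → (v, s₂) ∈ R) ∧
    (∀ v, 0 < P s₂ v → δ₂ v < 1 → (s₁, v) ∈ R) ∧
    -- (2) weight function condition on the visible parts
    (∃ Δ : S → S → ℝ,
      (∀ u v, 0 ≤ Δ u v ∧ Δ u v ≤ 1) ∧
      (∀ u v, 0 < Δ u v →
        (0 < P s₁ u ∧ 0 < δ₁ u) ∧ (0 < P s₂ v ∧ 0 < δ₂ v) ∧ (u, v) ∈ R) ∧
      (0 < (∑ u, δ₁ u * P s₁ u) → 0 < (∑ u, δ₂ u * P s₂ u) →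
        ∀ w, (∑ u, δ₁ u * P s₁ u) * (∑ v, Δ w v) = P s₁ w * δ₁ w ∧
             (∑ u, δ₂ u * P s₂ u) * (∑ v, Δ v w) = P s₂ w * δ₂ w)) ∧
    -- (3) reachability condition
    (∀ u₁, 0 < P s₁ u₁ → 0 < δ₁ u₁ →
      ∃ (ws : List S) (u₂ : S), PathPos P s₂ ws u₂ ∧
        (∀ w ∈ ws, (s₁, w) ∈ R) ∧ (u₁, u₂) ∈ R)

section Helpers

variable {S : Type*} [Fintype S]

lemma sum_vert (h : Vert S → ℝ) :
    ∑ v, h v = (∑ s, h (lft s)) + (∑ s, h (rgt s)) + (h src + h snk) := by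
  rw [Fintype.sum_sum_type, Fintype.sum_prod_type, Fintype.sum_bool, Fintype.sum_bool]
  simp only [lft, rgt, src, snk]
  ring

lemma nonpos_of_ofReal_le_zero {x : ℝ} (h : ENNReal.ofReal x ≤ 0) : x ≤ 0 :=
  ENNReal.ofReal_eq_zero.mp (le_zero_iff.mp h)

/-- constructor for a flow supported on forward edges -/
noncomputable def mkFlow (A B : S → ℝ) (C : S → S → ℝ) : Vert S → Vert S → ℝ :=
  fun v w =>
    match v, w with
    | Sum.inr false, Sum.inl (false, u) => A u
    | Sum.inl (false, u), Sum.inl (true, t) => C u t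
    | Sum.inl (true, t), Sum.inr true => B t
    | _, _ => 0

lemma isFlow_mk (μ μ' : S → ℝ) (R : Set (S × S)) (A B : S → ℝ) (C : S → S → ℝ)
    (hA0 : ∀ u, 0 ≤ A u) (hB0 : ∀ u, 0 ≤ B u) (hC0 : ∀ u t, 0 ≤ C u t)
    (hA : ∀ u, A u ≤ μ u) (hB : ∀ t, B t ≤ μ' t)
    (hCR : ∀ u t, 0 < C u t → (u, t) ∈ R)
    (hrow : ∀ u, ∑ t, C u t = A u) (hcol : ∀ t, ∑ u, C u t = B t) :
    IsFlow (cap μ μ' R) (fun v w => mkFlow A B C v w - mkFlow A B C w v) := by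
  refine ⟨?_, fun v w => by ring, ?_⟩
  · rintro (⟨b1, s⟩ | b1) (⟨b2, t⟩ | b2) <;> cases b1 <;> cases b2 <;>
      simp only [mkFlow, cap, sub_zero, zero_sub, sub_self, ENNReal.ofReal_zero,
        le_refl, zero_le] <;>
    first
      | (simp; done)
      | (exact ENNReal.ofReal_le_ofReal (hA _))
      | (exact ENNReal.ofReal_le_ofReal (hB _))
      | (simp [ENNReal.ofReal_eq_zero]; first | exact hC0 _ _ | exact hA0 _ | exact hB0 _)
      | (split_ifs with h
         · exact le_top
         · have hc : C s t ≤ 0 := by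
             by_contra hc
             exact h (hCR s t (lt_of_not_ge hc))
           simp [ENNReal.ofReal_eq_zero, hc])
  · rintro (⟨b, w⟩ | b) hv1 hv2
    · cases b
      · -- lft w
        have h1 : ∑ u, mkFlow A B C u (Sum.inl (false, w)) = A w := by
          rw [sum_vert (fun u => mkFlow A B C u (Sum.inl (false, w)))]
          simp [mkFlow, lft, rgt, src, snk]
        have h2 : ∑ u, mkFlow A B C (Sum.inl (false, w)) u = A w := by
          rw [sum_vert (fun u => mkFlow A B C (Sum.inl (false, w)) u)]
          simp [mkFlow, lft, rgt, src, snk, hrow w]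
        rw [Finset.sum_sub_distrib, h1, h2, sub_self]
      · -- rgt w
        have h1 : ∑ u, mkFlow A B C u (Sum.inl (true, w)) = B w := by
          rw [sum_vert (fun u => mkFlow A B C u (Sum.inl (true, w)))]
          simp [mkFlow, lft, rgt, src, snk, hcol w]
        have h2 : ∑ u, mkFlow A B C (Sum.inl (true, w)) u = B w := by
          rw [sum_vert (fun u => mkFlow A B C (Sum.inl (true, w)) u)]
          simp [mkFlow, lft, rgt, src, snk]
        rw [Finset.sum_sub_distrib, h1, h2, sub_self]
    · cases b
      · exact absurd rfl hv1
      · exact absurd rfl hv2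

end Helpers

/-- if `s₁ R s₂` and both states have a visible step
(`MU1 = post(s₁) \ R⁻¹(s₂) ≠ ∅` and `MU2 = post(s₂) \ R(s₁) ≠ ∅`), then
`s₁ ≾_R s₂` iff for some `γ > 0` there is a flow on the parametric network
`N(γ) = N(P(s₁,·), γ·P(s₂,·), R)` saturating all source edges into `MU1`
and all sink edges from `MU2`. -/
theorem weakSimUpTo_iff_valid_gamma (P : S → S → ℝ) (L : S → Set AP)
    (hP0 : ∀ s u, 0 ≤ P s u)
    (hrows : ∀ s, (∑ u, P s u) = 0 ∨ (∑ u, P s u) = 1)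
    (R : Set (S × S)) (s₁ s₂ : S) (hR : (s₁, s₂) ∈ R) (hL : L s₁ = L s₂)
    (hvis₁ : ∃ u, 0 < P s₁ u ∧ (u, s₂) ∉ R)
    (hvis₂ : ∃ u, 0 < P s₂ u ∧ (s₁, u) ∉ R) :
    WeakSimUpTo P L R s₁ s₂ ↔
    ∃ γ : ℝ, 0 < γ ∧
      ∃ f, IsFlow (cap (P s₁) (fun u => γ * P s₂ u) R) f ∧
        (∀ u, 0 < P s₁ u → (u, s₂) ∉ R → f src (lft u) = P s₁ u) ∧
        (∀ u, 0 < P s₂ u → (s₁, u) ∉ R → f (rgt u) snk = γ * P s₂ u) := by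
  constructor
  rintro ⟨-, δ1, δ2, hδ1, hδ2, hV1, hV2, ⟨Δ, hΔ01, hΔpos, hΔeq⟩, -⟩
  obtain ⟨u1, hu1P, hu1R⟩ := hvis₁
  obtain ⟨u2, hu2P, hu2R⟩ := hvis₂
  have hδ1u1 : δ1 u1 = 1 := le_antisymm (hδ1 u1).2 (not_lt.mp (fun h => hu1R (hV1 u1 hu1P h)))
  have hδ2u2 : δ2 u2 = 1 := le_antisymm (hδ2 u2).2 (not_lt.mp (fun h => hu2R (hV2 u2 hu2P h)))
  set K1 := ∑ u, δ1 u * P s₁ u with hK1def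
  set K2 := ∑ u, δ2 u * P s₂ u with hK2def
  have hK1 : 0 < K1 := by
    have h := Finset.single_le_sum (fun u (_ : u ∈ Finset.univ) =>
      mul_nonneg (hδ1 u).1 (hP0 s₁ u)) (Finset.mem_univ u1)
    rw [hδ1u1, one_mul] at h
    exact lt_of_lt_of_le hu1P h
  have hK2 : 0 < K2 := by
    have h := Finset.single_le_sum (fun u (_ : u ∈ Finset.univ) =>
      mul_nonneg (hδ2 u).1 (hP0 s₂ u)) (Finset.mem_univ u2)
    rw [hδ2u2, one_mul] at h
    exact lt_of_lt_of_le hu2P h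
  have heq := hΔeq hK1 hK2
  set A : S → ℝ := fun u => δ1 u * P s₁ u with hAdef
  set B : S → ℝ := fun t => (K1 / K2) * (δ2 t * P s₂ t) with hBdef
  set C : S → S → ℝ := fun u t => K1 * Δ u t with hCdef
  have hγ : 0 < K1 / K2 := div_pos hK1 hK2
  refine ⟨K1 / K2, hγ, fun v w => mkFlow A B C v w - mkFlow A B C w v,
    isFlow_mk (P s₁) (fun u => (K1 / K2) * P s₂ u) R A B C
      (fun u => mul_nonneg (hδ1 u).1 (hP0 s₁ u))
      (fun t => mul_nonneg hγ.le (mul_nonneg (hδ2 t).1 (hP0 s₂ t)))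
      (fun u t => mul_nonneg hK1.le (hΔ01 u t).1)
      (fun u => mul_le_of_le_one_left (hP0 s₁ u) (hδ1 u).2)
      (fun t => mul_le_mul_of_nonneg_left
        (mul_le_of_le_one_left (hP0 s₂ t) (hδ2 t).2) hγ.le)
      (fun u t h => (hΔpos u t (by simp only [hCdef] at h; nlinarith [(hΔ01 u t).1])).2.2)
      (fun u => by rw [← Finset.mul_sum, (heq u).1]; ring)
      (fun t => by
        rw [← Finset.mul_sum]
        have h := (heq t).2
        simp only [hBdef]
        rw [div_mul_eq_mul_div, eq_div_iff hK2.ne']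
        linear_combination K1 * h), ?_, ?_⟩
  · intro u hu hnR
    have h1 : δ1 u = 1 := le_antisymm (hδ1 u).2 (not_lt.mp (fun h => hnR (hV1 u hu h)))
    show A u - 0 = P s₁ u
    simp [hAdef, h1]
  · intro u hu hnR
    have h1 : δ2 u = 1 := le_antisymm (hδ2 u).2 (not_lt.mp (fun h => hnR (hV2 u hu h)))
    show B u - 0 = (K1 / K2) * P s₂ u
    simp [hBdef, h1]
  rintro ⟨γ, hγ, f, ⟨hcap, hskew, hcons⟩, hsat1, hsat2⟩
  have hle0 : ∀ v w, cap (P s₁) (fun u => γ * P s₂ u) R v w = 0 → f v w ≤ 0 := fun v w h =>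
    nonpos_of_ofReal_le_zero (h ▸ hcap v w)
  have hzero : ∀ v w, cap (P s₁) (fun u => γ * P s₂ u) R v w = 0 →
      cap (P s₁) (fun u => γ * P s₂ u) R w v = 0 → f v w = 0 := by
    intro v w h1 h2
    have a1 := hle0 v w h1
    have a2 := hle0 w v h2
    have a3 := hskew v w
    linarith
  have hf1nn : ∀ u, 0 ≤ f src (lft u) := by
    intro u
    have a1 := hle0 (lft u) src rfl
    have a2 := hskew src (lft u)
    linarith
  have hf1le : ∀ u, f src (lft u) ≤ P s₁ u := by
    intro u
    have h : ENNReal.ofReal (f src (lft u)) ≤ ENNReal.ofReal (P s₁ u) := hcap src (lft u)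
    exact (ENNReal.ofReal_le_ofReal_iff (hP0 s₁ u)).mp h
  have hfmnn : ∀ u v, 0 ≤ f (lft u) (rgt v) := by
    intro u v
    have a1 := hle0 (rgt v) (lft u) rfl
    have a2 := hskew (lft u) (rgt v)
    linarith
  have hfm0 : ∀ u v, (u, v) ∉ R → f (lft u) (rgt v) = 0 := by
    intro u v hnR
    refine le_antisymm (hle0 _ _ ?_) (hfmnn u v)
    show (if (u, v) ∈ R then (⊤ : ℝ≥0∞) else 0) = 0
    rw [if_neg hnR]
  have hf2nn : ∀ v, 0 ≤ f (rgt v) snk := by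
    intro v
    have a1 := hle0 snk (rgt v) rfl
    have a2 := hskew (rgt v) snk
    linarith
  have hf2le : ∀ v, f (rgt v) snk ≤ γ * P s₂ v := by
    intro v
    have h : ENNReal.ofReal (f (rgt v) snk) ≤ ENNReal.ofReal (γ * P s₂ v) := hcap (rgt v) snk
    exact (ENNReal.ofReal_le_ofReal_iff (mul_nonneg hγ.le (hP0 s₂ v))).mp h
  have hconsL : ∀ w, f src (lft w) = ∑ v, f (lft w) (rgt v) := by
    intro w
    have h := hcons (lft w) (by simp [lft, src]) (by simp [lft, snk])
    rw [sum_vert (fun u => f u (lft w))] at h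
    have e1 : ∑ s, f (lft s) (lft w) = 0 :=
      Finset.sum_eq_zero fun s _ => hzero _ _ rfl rfl
    have e2 : ∑ s, f (rgt s) (lft w) = - ∑ s, f (lft w) (rgt s) := by
      rw [← Finset.sum_neg_distrib]
      exact Finset.sum_congr rfl fun s _ => by rw [hskew (rgt s) (lft w)]
    have e3 : f snk (lft w) = 0 := hzero _ _ rfl rfl
    rw [e1, e2, e3] at h
    linarith
  have hconsR : ∀ w, f (rgt w) snk = ∑ u, f (lft u) (rgt w) := by
    intro w
    have h := hcons (rgt w) (by simp [rgt, src]) (by simp [rgt, snk])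
    rw [sum_vert (fun u => f u (rgt w))] at h
    have e1 : ∑ s, f (rgt s) (rgt w) = 0 :=
      Finset.sum_eq_zero fun s _ => hzero _ _ rfl rfl
    have e2 : f src (rgt w) = 0 := hzero _ _ rfl rfl
    have e3 : f snk (rgt w) = - f (rgt w) snk := by rw [hskew]
    rw [e1, e2, e3] at h
    linarith
  set F := ∑ u, f src (lft u) with hFdef
  obtain ⟨u1, hu1P, hu1R⟩ := hvis₁
  have hFpos : 0 < F := by
    have h := Finset.single_le_sum (fun u (_ : u ∈ Finset.univ) => hf1nn u) (Finset.mem_univ u1)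
    rw [hsat1 u1 hu1P hu1R] at h
    exact lt_of_lt_of_le hu1P h
  have hFsnk : ∑ v, f (rgt v) snk = F := by
    rw [hFdef]
    calc ∑ v, f (rgt v) snk = ∑ v, ∑ u, f (lft u) (rgt v) :=
          Finset.sum_congr rfl fun v _ => hconsR v
      _ = ∑ u, ∑ v, f (lft u) (rgt v) := Finset.sum_comm
      _ = ∑ u, f src (lft u) := Finset.sum_congr rfl fun u _ => (hconsL u).symm
  have hP1zero : ∀ u, ¬ 0 < P s₁ u → f src (lft u) = 0 := by
    intro u h
    have hp : P s₁ u = 0 := le_antisymm (not_lt.mp h) (hP0 s₁ u)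
    have h1 := hf1le u
    have h2 := hf1nn u
    linarith
  have hP2zero : ∀ v, ¬ 0 < P s₂ v → f (rgt v) snk = 0 := by
    intro v h
    have hp : P s₂ v = 0 := le_antisymm (not_lt.mp h) (hP0 s₂ v)
    have h1 := hf2le v
    have h2 := hf2nn v
    rw [hp, mul_zero] at h1
    linarith
  set δ1 : S → ℝ := fun u => if 0 < P s₁ u then f src (lft u) / P s₁ u else 1 with hδ1def
  set δ2 : S → ℝ := fun v => if 0 < P s₂ v then f (rgt v) snk / (γ * P s₂ v) else 1 with hδ2def
  set Δ : S → S → ℝ := fun u v => f (lft u) (rgt v) / F with hΔdef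
  have hd1P : ∀ u, δ1 u * P s₁ u = f src (lft u) := by
    intro u
    by_cases h : 0 < P s₁ u
    · simp only [hδ1def, if_pos h]
      exact div_mul_cancel₀ _ (ne_of_gt h)
    · have hp : P s₁ u = 0 := le_antisymm (not_lt.mp h) (hP0 s₁ u)
      rw [hp, mul_zero, hP1zero u h]
  have hd2P : ∀ v, δ2 v * P s₂ v = f (rgt v) snk / γ := by
    intro v
    by_cases h : 0 < P s₂ v
    · simp only [hδ2def, if_pos h]
      have hγ0 : γ ≠ 0 := ne_of_gt hγ
      have hp0 : P s₂ v ≠ 0 := ne_of_gt h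
      field_simp
    · have hp : P s₂ v = 0 := le_antisymm (not_lt.mp h) (hP0 s₂ v)
      rw [hp, mul_zero, hP2zero v h, zero_div]
  have hK1F : ∑ u, δ1 u * P s₁ u = F := by
    rw [hFdef]; exact Finset.sum_congr rfl fun u _ => hd1P u
  have hK2F : ∑ v, δ2 v * P s₂ v = F / γ := by
    calc ∑ v, δ2 v * P s₂ v = ∑ v, f (rgt v) snk / γ :=
          Finset.sum_congr rfl fun v _ => hd2P v
      _ = (∑ v, f (rgt v) snk) / γ := (Finset.sum_div _ _ _).symm
      _ = F / γ := by rw [hFsnk]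
  have hmleF : ∀ u v, f (lft u) (rgt v) ≤ F := by
    intro u v
    calc f (lft u) (rgt v) ≤ ∑ t, f (lft u) (rgt t) :=
          Finset.single_le_sum (fun t (_ : t ∈ Finset.univ) => hfmnn u t) (Finset.mem_univ v)
      _ = f src (lft u) := (hconsL u).symm
      _ ≤ F := Finset.single_le_sum (fun t (_ : t ∈ Finset.univ) => hf1nn t) (Finset.mem_univ u)
  refine ⟨hL, δ1, δ2, ?_, ?_, ?_, ?_, ⟨Δ, ?_, ?_, ?_⟩, ?_⟩
  · -- δ1 bounds
    intro u
    by_cases h : 0 < P s₁ u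
    · simp only [hδ1def, if_pos h]
      exact ⟨div_nonneg (hf1nn u) (hP0 s₁ u), (div_le_one h).mpr (hf1le u)⟩
    · simp only [hδ1def, if_neg h]
      exact ⟨zero_le_one, le_refl 1⟩
  · -- δ2 bounds
    intro v
    by_cases h : 0 < P s₂ v
    · simp only [hδ2def, if_pos h]
      exact ⟨div_nonneg (hf2nn v) (mul_nonneg hγ.le (hP0 s₂ v)),
        (div_le_one (mul_pos hγ h)).mpr (hf2le v)⟩
    · simp only [hδ2def, if_neg h]
      exact ⟨zero_le_one, le_refl 1⟩
  · -- V1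
    intro v hv hlt
    by_contra hnR
    have hs := hsat1 v hv hnR
    simp only [hδ1def, if_pos hv] at hlt
    rw [hs, div_self (ne_of_gt hv)] at hlt
    exact lt_irrefl 1 hlt
  · -- V2
    intro v hv hlt
    by_contra hnR
    have hs := hsat2 v hv hnR
    simp only [hδ2def, if_pos hv] at hlt
    rw [hs, div_self (ne_of_gt (mul_pos hγ hv))] at hlt
    exact lt_irrefl 1 hlt
  · -- Δ bounds
    intro u v
    simp only [hΔdef]
    exact ⟨div_nonneg (hfmnn u v) hFpos.le, (div_le_one hFpos).mpr (hmleF u v)⟩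
  · -- Δ pos
    intro u v h
    simp only [hΔdef] at h
    have hfuv : 0 < f (lft u) (rgt v) := by
      rcases div_pos_iff.mp h with ⟨h1, _⟩ | ⟨_, h2⟩
      · exact h1
      · linarith
    have h1 : 0 < f src (lft u) := by
      rw [hconsL u]
      exact lt_of_lt_of_le hfuv
        (Finset.single_le_sum (fun t (_ : t ∈ Finset.univ) => hfmnn u t) (Finset.mem_univ v))
    have hPu : 0 < P s₁ u := lt_of_lt_of_le h1 (hf1le u)
    have h2 : 0 < f (rgt v) snk := by
      rw [hconsR v]
      exact lt_of_lt_of_le hfuv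
        (Finset.single_le_sum (fun t (_ : t ∈ Finset.univ) => hfmnn t v) (Finset.mem_univ u))
    have hγP : 0 < γ * P s₂ v := lt_of_lt_of_le h2 (hf2le v)
    have hPv : 0 < P s₂ v := by nlinarith
    refine ⟨⟨hPu, ?_⟩, ⟨hPv, ?_⟩, ?_⟩
    · simp only [hδ1def, if_pos hPu]
      exact div_pos h1 hPu
    · simp only [hδ2def, if_pos hPv]
      exact div_pos h2 hγP
    · by_contra hnR
      rw [hfm0 u v hnR] at hfuv
      exact lt_irrefl 0 hfuv
  · -- weight equations
    intro _ _ w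
    constructor
    · rw [hK1F]
      have hsum : ∑ v, Δ w v = f src (lft w) / F := by
        simp only [hΔdef]
        rw [← Finset.sum_div, ← hconsL w]
      rw [hsum, mul_comm, div_mul_cancel₀ _ (ne_of_gt hFpos)]
      by_cases h : 0 < P s₁ w
      · simp only [hδ1def, if_pos h]
        rw [mul_comm, div_mul_cancel₀ _ (ne_of_gt h)]
      · have hp : P s₁ w = 0 := le_antisymm (not_lt.mp h) (hP0 s₁ w)
        rw [hP1zero w h, hp, zero_mul]
    · rw [hK2F]
      have hsum : ∑ v, Δ v w = f (rgt w) snk / F := by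
        simp only [hΔdef]
        rw [← Finset.sum_div, ← hconsR w]
      rw [hsum]
      have hL' : F / γ * (f (rgt w) snk / F) = f (rgt w) snk / γ := by
        field_simp
      rw [hL']
      by_cases h : 0 < P s₂ w
      · simp only [hδ2def, if_pos h]
        have h0 : P s₂ w ≠ 0 := ne_of_gt h
        have hγ0 : γ ≠ 0 := ne_of_gt hγ
        field_simp
      · have hp : P s₂ w = 0 := le_antisymm (not_lt.mp h) (hP0 s₂ w)
        rw [hP2zero w h, hp, zero_div, zero_mul]
  · -- reachability
    intro u₁ hPu hδu
    simp only [hδ1def, if_pos hPu] at hδu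
    have h1 : 0 < f src (lft u₁) := by
      rcases div_pos_iff.mp hδu with ⟨h1, _⟩ | ⟨_, h2⟩
      · exact h1
      · linarith
    rw [hconsL u₁] at h1
    have hex : ∃ v, 0 < f (lft u₁) (rgt v) := by
      by_contra hno
      push_neg at hno
      have : ∑ v, f (lft u₁) (rgt v) ≤ 0 :=
        Finset.sum_nonpos fun v _ => hno v
      linarith
    obtain ⟨v, hfv⟩ := hex
    have hRv : (u₁, v) ∈ R := by
      by_contra hnR
      rw [hfm0 u₁ v hnR] at hfv
      exact lt_irrefl 0 hfv
    have h2 : 0 < f (rgt v) snk := by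
      rw [hconsR v]
      exact lt_of_lt_of_le hfv
        (Finset.single_le_sum (fun t (_ : t ∈ Finset.univ) => hfmnn t v) (Finset.mem_univ u₁))
    have hγP : 0 < γ * P s₂ v := lt_of_lt_of_le h2 (hf2le v)
    have hPv : 0 < P s₂ v := by nlinarith
    exact ⟨[], v, hPv, fun w hw => absurd hw List.not_mem_nil, hRv⟩
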